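/- arXiv:1304.5288 — 5 statements merged into one kernel-verified Lean document; each statement's English description precedes it below -/
import Mathlib

section
/- Let C be a nodal curve and let Z, Z' be 2-tails of C (connected subcurves with connected complement meeting their complement in exactly 2 points). Suppose there are irreducible components C_γ and C_{γ'} with C_γ ∪ C_{γ'} ⊆ Z ∧ Z' (the union of components contained in Z ∩ Z') and a fixed smooth point σ(0) contained in Z^c ∧ (Z')^c. Then Z ∧ Z' is a 2-tail of C. -/
open Finset

/-- A combinatorial model of a nodal curve: `V` is the set of irreducible
components, `N` the set of nodes, `ends e` the (one or two) components through
the node `e`, `gen v` the geometric genus of the component `v`, and `base` the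
component containing the marked smooth point `σ(0)`. -/
structure NodalGraph where
  V : Type
  N : Type
  [fV : Fintype V]
  [dV : DecidableEq V]
  [fN : Fintype N]
  [dN : DecidableEq N]
  ends : N → V × V
  gen : V → ℕ
  base : V

attribute [instance] NodalGraph.fV NodalGraph.dV NodalGraph.fN NodalGraph.dN

namespace NodalGraph

variable (G : NodalGraph)

/-- Two components are adjacent if some node lies on both. -/
def Adj (a b : G.V) : Prop := ∃ e, G.ends e = (a, b) ∨ G.ends e = (b, a)

/-- The set of terminal points of a subcurve `Z`, i.e. the nodes in `Z ∩ Zᶜ`. -/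
def Term (Z : Finset G.V) : Finset G.N :=
  univ.filter (fun e =>
    ((G.ends e).1 ∈ Z ∧ (G.ends e).2 ∉ Z) ∨ ((G.ends e).1 ∉ Z ∧ (G.ends e).2 ∈ Z))

/-- `k_Z`, the number of terminal points of `Z`. -/
def k (Z : Finset G.V) : ℕ := (G.Term Z).card

/-- A (nonempty) subcurve is connected. -/
def ConnSub (Z : Finset G.V) : Prop :=
  Z.Nonempty ∧ ∀ u ∈ Z, ∀ v ∈ Z,
    Relation.ReflTransGen (fun a b => a ∈ Z ∧ b ∈ Z ∧ G.Adj a b) u v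

/-- The whole curve is connected. -/
def Connected : Prop := G.ConnSub univ

/-- A tail: a proper subcurve `Z` with both `Z` and `Zᶜ` connected. -/
def IsTail (Z : Finset G.V) : Prop := Z ≠ univ ∧ G.ConnSub Z ∧ G.ConnSub Zᶜ

/-- A `m`-tail: a tail with `k_Z = m`. -/
def IsKTail (Z : Finset G.V) (m : ℕ) : Prop := G.IsTail Z ∧ G.k Z = m

/-- The node `e` lies on the component `v`. -/
def onComp (e : G.N) (v : G.V) : Prop := (G.ends e).1 = v ∨ (G.ends e).2 = v

/-- The node `e`, as a point of the curve, lies on the subcurve `Z`. -/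
def nodeOn (e : G.N) (Z : Finset G.V) : Prop := (G.ends e).1 ∈ Z ∨ (G.ends e).2 ∈ Z

/-- The subcurve `Z` crosses the node `e`: both branches of `e` lie in `Z`. -/
def crosses (Z : Finset G.V) (e : G.N) : Prop := (G.ends e).1 ∈ Z ∧ (G.ends e).2 ∈ Z

/-- `Z ≺ Z'`: strict inclusion with disjoint terminal points. -/
def prec (Z Z' : Finset G.V) : Prop := Z ⊂ Z' ∧ G.Term Z ∩ G.Term Z' = ∅

/-- The pair `(Z, Z')` is free: disjoint terminal points. -/
def free (Z Z' : Finset G.V) : Prop := G.Term Z ∩ G.Term Z' = ∅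

/-- The pair `(Z, Z')` is perfect. -/
def perfect (Z Z' : Finset G.V) : Prop := Z ⊆ Z' ∨ Z' ⊆ Z ∨ Zᶜ ⊆ Z' ∨ Z' ⊆ Zᶜ

/-- `T¹_γ`: the nested set of 1-tails containing `C_γ` and avoiding `σ(0)`. -/
def T1 (γ : G.V) : Set (Finset G.V) := { Z | G.IsKTail Z 1 ∧ γ ∈ Z ∧ G.base ∉ Z }

/-- The defining condition for the 2-tails entering `T²_{γ,γ'}`. -/
def cond2 (γ γ' : G.V) (Z : Finset G.V) : Prop :=
  G.IsKTail Z 2 ∧ γ ∈ Z ∧ γ' ∈ Z ∧ G.base ∉ Z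

/-- `W 0 ≺ W 1 ≺ ⋯ ≺ W (M-1)` is the nested set `T²_{γ,γ'}` of 2-tails:
each `W t` is minimal among the 2-tails `Z ⊇ C_γ ∪ C_γ'` with `σ(0) ∈ Zᶜ`
and `W (t-1) ≺ Z` (starting from `W_{-1} = ∅`), and the chain is maximal. -/
def IsNested2 (γ γ' : G.V) (M : ℕ) (W : ℕ → Finset G.V) : Prop :=
  (∀ t < M, Minimal (fun Z => G.cond2 γ γ' Z ∧ G.prec (if t = 0 then ∅ else W (t - 1)) Z) (W t)) ∧
  ¬ ∃ Z, G.cond2 γ γ' Z ∧ G.prec (if M = 0 then ∅ else W (M - 1)) Z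

/-- The set underlying a finite chain `W 0, …, W (M-1)`. -/
def chainSet (M : ℕ) (W : ℕ → Finset G.V) : Set (Finset G.V) := { Z | ∃ t < M, W t = Z }

/-- The defining condition for the 3-tails entering `T³_{γ,γ'}`:
3-tails that are moreover free with respect to every member of `T²_{γ,γ'}`. -/
def cond3 (γ γ' : G.V) (T2 : Set (Finset G.V)) (Z : Finset G.V) : Prop :=
  G.IsKTail Z 3 ∧ γ ∈ Z ∧ γ' ∈ Z ∧ G.base ∉ Z ∧ ∀ W ∈ T2, G.free Z W

/-- `W 0 ≺ ⋯ ≺ W (M-1)` is the nested set `T³_{γ,γ'}` of 3-tails (relative to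
the set `T2` of nested 2-tails). -/
def IsNested3 (γ γ' : G.V) (T2 : Set (Finset G.V)) (M : ℕ) (W : ℕ → Finset G.V) : Prop :=
  (∀ t < M, Minimal (fun Z => G.cond3 γ γ' T2 Z ∧ G.prec (if t = 0 then ∅ else W (t - 1)) Z) (W t)) ∧
  ¬ ∃ Z, G.cond3 γ γ' T2 Z ∧ G.prec (if M = 0 then ∅ else W (M - 1)) Z

end NodalGraph

section Aux

namespace NodalGraph

variable (G : NodalGraph)

def crossSet (S T : Finset G.V) : Finset G.N :=
  Finset.univ.filter (fun e =>
    ((G.ends e).1 ∈ S ∧ (G.ends e).2 ∈ T) ∨ ((G.ends e).1 ∈ T ∧ (G.ends e).2 ∈ S))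

lemma mem_crossSet {S T : Finset G.V} {e : G.N} :
    e ∈ G.crossSet S T ↔
      ((G.ends e).1 ∈ S ∧ (G.ends e).2 ∈ T) ∨ ((G.ends e).1 ∈ T ∧ (G.ends e).2 ∈ S) := by
  simp [crossSet]

lemma crossSet_comm (S T : Finset G.V) : G.crossSet S T = G.crossSet T S := by
  ext e; simp only [mem_crossSet]; tauto

lemma crossSet_empty (T : Finset G.V) : G.crossSet ∅ T = ∅ := by
  ext e; simp [mem_crossSet]

lemma adj_symm {a b : G.V} (h : G.Adj a b) : G.Adj b a := by
  obtain ⟨e, he⟩ := h; exact ⟨e, he.symm⟩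

/-- if a connected subcurve splits into two nonempty parts, there is a crossing edge -/
lemma exists_cross {S S1 S2 : Finset G.V}
    (hS : G.ConnSub S) (hpart : ∀ x, x ∈ S ↔ x ∈ S1 ∨ x ∈ S2)
    (hdisj : ∀ x, x ∈ S1 → x ∈ S2 → False)
    (h1 : S1.Nonempty) (h2 : S2.Nonempty) :
    (G.crossSet S1 S2).Nonempty := by
  obtain ⟨u, hu⟩ := h1
  obtain ⟨v, hv⟩ := h2
  have huS : u ∈ S := (hpart u).2 (Or.inl hu)
  have hvS : v ∈ S := (hpart v).2 (Or.inr hv)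
  have key : ∀ w, Relation.ReflTransGen
      (fun a b => a ∈ S ∧ b ∈ S ∧ G.Adj a b) u w → w ∈ S2 →
      (G.crossSet S1 S2).Nonempty := by
    intro w hw
    induction hw with
    | refl => exact fun h2 => absurd h2 (fun h => hdisj u hu h)
    | @tail b c hub hbc ih =>
      intro hc
      rcases (hpart b).1 hbc.1 with hb1 | hb2
      · obtain ⟨e, he⟩ := hbc.2.2
        refine ⟨e, (G.mem_crossSet).2 ?_⟩
        rcases he with he | he
        · exact Or.inl ⟨by rw [he]; exact hb1, by rw [he]; exact hc⟩
        · exact Or.inr ⟨by rw [he]; exact hc, by rw [he]; exact hb1⟩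
      · exact ih hb2
  exact key v (hS.2 u huS v hvS) hv

/-- walk surgery: a subset of a connected subcurve whose boundary within it
emanates from a single vertex is itself connected -/
lemma connSub_of_unique_boundary {S A : Finset G.V}
    (hS : G.ConnSub S) (hsub : A ⊆ S) (hA : A.Nonempty) (x : G.V) (hx : x ∈ A)
    (hbd : ∀ a b, a ∈ A → b ∈ S → b ∉ A → G.Adj a b → a = x) :
    G.ConnSub A := by
  refine ⟨hA, ?_⟩
  intro u hu v hv
  have key : ∀ w, Relation.ReflTransGen
      (fun a b => a ∈ S ∧ b ∈ S ∧ G.Adj a b) u w →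
      (w ∈ A → Relation.ReflTransGen (fun a b => a ∈ A ∧ b ∈ A ∧ G.Adj a b) u w) ∧
      (w ∉ A → Relation.ReflTransGen (fun a b => a ∈ A ∧ b ∈ A ∧ G.Adj a b) u x) := by
    intro w hw
    induction hw with
    | refl => exact ⟨fun _ => Relation.ReflTransGen.refl, fun h => absurd hu h⟩
    | @tail b c hub hbc ih =>
      by_cases hbA : b ∈ A
      · by_cases hcA : c ∈ A
        · exact ⟨fun _ => (ih.1 hbA).tail ⟨hbA, hcA, hbc.2.2⟩, fun h => absurd hcA h⟩
        · have hbx : b = x := hbd b c hbA hbc.2.1 hcA hbc.2.2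
          exact ⟨fun h => absurd h hcA, fun _ => hbx ▸ ih.1 hbA⟩
      · by_cases hcA : c ∈ A
        · have hcx : c = x := hbd c b hcA hbc.1 hbA (G.adj_symm hbc.2.2)
          exact ⟨fun _ => hcx ▸ ih.2 hbA, fun h => absurd hcA h⟩
        · exact ⟨fun h => absurd h hcA, fun _ => ih.2 hbA⟩
  exact (key v (hS.2 u (hsub hu) v (hsub hv))).1 hv

lemma connSub_mono {S T : Finset G.V} (hST : S ⊆ T) {u v : G.V}
    (h : Relation.ReflTransGen (fun a b => a ∈ S ∧ b ∈ S ∧ G.Adj a b) u v) :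
    Relation.ReflTransGen (fun a b => a ∈ T ∧ b ∈ T ∧ G.Adj a b) u v :=
  Relation.ReflTransGen.mono (fun a b (hab : a ∈ S ∧ b ∈ S ∧ G.Adj a b) =>
    (⟨hST hab.1, hST hab.2.1, hab.2.2⟩ : a ∈ T ∧ b ∈ T ∧ G.Adj a b)) u v h

lemma connSub_union {S T : Finset G.V} (hS : G.ConnSub S) (hT : G.ConnSub T)
    {p : G.V} (hpS : p ∈ S) (hpT : p ∈ T) : G.ConnSub (S ∪ T) := by
  have hsymm : Symmetric (fun a b => a ∈ S ∪ T ∧ b ∈ S ∪ T ∧ G.Adj a b) :=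
    fun a b ⟨h1, h2, h3⟩ => ⟨h2, h1, G.adj_symm h3⟩
  refine ⟨⟨p, Finset.mem_union_left _ hpS⟩, ?_⟩
  have aux : ∀ u ∈ S ∪ T, Relation.ReflTransGen
      (fun a b => a ∈ S ∪ T ∧ b ∈ S ∪ T ∧ G.Adj a b) u p := by
    intro u hu
    rcases Finset.mem_union.1 hu with h | h
    · exact G.connSub_mono Finset.subset_union_left (hS.2 u h p hpS)
    · exact G.connSub_mono Finset.subset_union_right (hT.2 u h p hpT)
  intro u hu v hv
  exact (aux u hu).trans ((@Relation.ReflTransGen.stdSymm _ _ ⟨fun a b h => hsymm h⟩).symm _ _ (aux v hv))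

lemma crossSet_union_right (S T1 T2 : Finset G.V) :
    G.crossSet S (T1 ∪ T2) = G.crossSet S T1 ∪ G.crossSet S T2 := by
  ext e
  simp only [mem_crossSet, Finset.mem_union]
  tauto

lemma crossSet_disjoint {S T S' T' : Finset G.V}
    (c1 : ∀ x y, x ∈ S → x ∈ S' → y ∈ T → y ∈ T' → False)
    (c2 : ∀ x y, x ∈ S → x ∈ T' → y ∈ T → y ∈ S' → False)
    (c3 : ∀ x y, x ∈ T → x ∈ S' → y ∈ S → y ∈ T' → False)
    (c4 : ∀ x y, x ∈ T → x ∈ T' → y ∈ S → y ∈ S' → False) :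
    Disjoint (G.crossSet S T) (G.crossSet S' T') := by
  rw [Finset.disjoint_left]
  intro e he he'
  rw [mem_crossSet] at he he'
  rcases he with ⟨hx, hy⟩ | ⟨hx, hy⟩ <;> rcases he' with ⟨hx', hy'⟩ | ⟨hx', hy'⟩
  · exact c1 _ _ hx hx' hy hy'
  · exact c2 _ _ hx hx' hy hy'
  · exact c3 _ _ hx hx' hy hy'
  · exact c4 _ _ hx hx' hy hy'

/-- splitting the terminal set of `Z` according to a partition of `Z` and of `Zᶜ` -/
lemma term_card_split (Z A Q P B : Finset G.V)
    (hAQ : ∀ x, x ∈ Z ↔ x ∈ A ∨ x ∈ Q)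
    (hPB : ∀ x, x ∉ Z ↔ x ∈ P ∨ x ∈ B)
    (hAQd : ∀ x, x ∈ A → x ∈ Q → False)
    (hPBd : ∀ x, x ∈ P → x ∈ B → False) :
    (G.Term Z).card = (G.crossSet A P).card + (G.crossSet A B).card
      + (G.crossSet Q P).card + (G.crossSet Q B).card := by
  have hAZ : ∀ x, x ∈ A → x ∈ Z := fun x h => (hAQ x).2 (Or.inl h)
  have hQZ : ∀ x, x ∈ Q → x ∈ Z := fun x h => (hAQ x).2 (Or.inr h)
  have hPZ : ∀ x, x ∈ P → x ∉ Z := fun x h => (hPB x).2 (Or.inl h)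
  have hBZ : ∀ x, x ∈ B → x ∉ Z := fun x h => (hPB x).2 (Or.inr h)
  have hsplit : G.Term Z =
      ((G.crossSet A P ∪ G.crossSet A B) ∪ G.crossSet Q P) ∪ G.crossSet Q B := by
    ext e
    constructor
    · intro he
      rw [Term, Finset.mem_filter] at he
      rcases he.2 with ⟨hz1, hz2⟩ | ⟨hz1, hz2⟩
      · rcases (hAQ _).1 hz1 with hA1 | hQ1 <;> rcases (hPB _).1 hz2 with hP2 | hB2
        · exact Finset.mem_union_left _ (Finset.mem_union_left _ (Finset.mem_union_left _
            ((G.mem_crossSet).2 (Or.inl ⟨hA1, hP2⟩))))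
        · exact Finset.mem_union_left _ (Finset.mem_union_left _ (Finset.mem_union_right _
            ((G.mem_crossSet).2 (Or.inl ⟨hA1, hB2⟩))))
        · exact Finset.mem_union_left _ (Finset.mem_union_right _
            ((G.mem_crossSet).2 (Or.inl ⟨hQ1, hP2⟩)))
        · exact Finset.mem_union_right _ ((G.mem_crossSet).2 (Or.inl ⟨hQ1, hB2⟩))
      · rcases (hAQ _).1 hz2 with hA2 | hQ2 <;> rcases (hPB _).1 hz1 with hP1 | hB1
        · exact Finset.mem_union_left _ (Finset.mem_union_left _ (Finset.mem_union_left _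
            ((G.mem_crossSet).2 (Or.inr ⟨hP1, hA2⟩))))
        · exact Finset.mem_union_left _ (Finset.mem_union_left _ (Finset.mem_union_right _
            ((G.mem_crossSet).2 (Or.inr ⟨hB1, hA2⟩))))
        · exact Finset.mem_union_left _ (Finset.mem_union_right _
            ((G.mem_crossSet).2 (Or.inr ⟨hP1, hQ2⟩)))
        · exact Finset.mem_union_right _ ((G.mem_crossSet).2 (Or.inr ⟨hB1, hQ2⟩))
    · intro he
      rw [Term, Finset.mem_filter]
      refine ⟨Finset.mem_univ e, ?_⟩
      rcases Finset.mem_union.1 he with he | he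
      · rcases Finset.mem_union.1 he with he | he
        · rcases Finset.mem_union.1 he with he | he
          · rcases (G.mem_crossSet).1 he with ⟨h1, h2⟩ | ⟨h1, h2⟩
            · exact Or.inl ⟨hAZ _ h1, hPZ _ h2⟩
            · exact Or.inr ⟨hPZ _ h1, hAZ _ h2⟩
          · rcases (G.mem_crossSet).1 he with ⟨h1, h2⟩ | ⟨h1, h2⟩
            · exact Or.inl ⟨hAZ _ h1, hBZ _ h2⟩
            · exact Or.inr ⟨hBZ _ h1, hAZ _ h2⟩
        · rcases (G.mem_crossSet).1 he with ⟨h1, h2⟩ | ⟨h1, h2⟩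
          · exact Or.inl ⟨hQZ _ h1, hPZ _ h2⟩
          · exact Or.inr ⟨hPZ _ h1, hQZ _ h2⟩
      · rcases (G.mem_crossSet).1 he with ⟨h1, h2⟩ | ⟨h1, h2⟩
        · exact Or.inl ⟨hQZ _ h1, hBZ _ h2⟩
        · exact Or.inr ⟨hBZ _ h1, hQZ _ h2⟩
  have dAPAB : Disjoint (G.crossSet A P) (G.crossSet A B) :=
    G.crossSet_disjoint
      (fun _ y _ _ hy hy' => hPBd y hy hy')
      (fun x _ hx hx' _ _ => hBZ x hx' (hAZ x hx))
      (fun x _ hx hx' _ _ => hPZ x hx (hAZ x hx'))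
      (fun x _ hx hx' _ _ => hPBd x hx hx')
  have dQP : Disjoint (G.crossSet A P ∪ G.crossSet A B) (G.crossSet Q P) := by
    rw [Finset.disjoint_union_left]
    constructor
    · exact G.crossSet_disjoint
        (fun x _ hx hx' _ _ => hAQd x hx hx')
        (fun x _ hx hx' _ _ => hPZ x hx' (hAZ x hx))
        (fun x _ hx hx' _ _ => hPZ x hx (hQZ x hx'))
        (fun _ y _ _ hy hy' => hAQd y hy hy')
    · exact G.crossSet_disjoint
        (fun x _ hx hx' _ _ => hAQd x hx hx')
        (fun x _ hx hx' _ _ => hPZ x hx' (hAZ x hx))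
        (fun x _ hx hx' _ _ => hBZ x hx (hQZ x hx'))
        (fun _ y _ _ hy hy' => hAQd y hy hy')
  have dQB : Disjoint ((G.crossSet A P ∪ G.crossSet A B) ∪ G.crossSet Q P)
      (G.crossSet Q B) := by
    rw [Finset.disjoint_union_left, Finset.disjoint_union_left]
    refine ⟨⟨?_, ?_⟩, ?_⟩
    · exact G.crossSet_disjoint
        (fun x _ hx hx' _ _ => hAQd x hx hx')
        (fun x _ hx hx' _ _ => hBZ x hx' (hAZ x hx))
        (fun x _ hx hx' _ _ => hPZ x hx (hQZ x hx'))
        (fun x _ hx hx' _ _ => hPBd x hx hx')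
    · exact G.crossSet_disjoint
        (fun x _ hx hx' _ _ => hAQd x hx hx')
        (fun x _ hx hx' _ _ => hBZ x hx' (hAZ x hx))
        (fun x _ hx hx' _ _ => hBZ x hx (hQZ x hx'))
        (fun _ y _ _ hy hy' => hAQd y hy hy')
    · exact G.crossSet_disjoint
        (fun _ y _ _ hy hy' => hPBd y hy hy')
        (fun x _ hx hx' _ _ => hBZ x hx' (hQZ x hx))
        (fun x _ hx hx' _ _ => hPZ x hx (hQZ x hx'))
        (fun x _ hx hx' _ _ => hPBd x hx hx')
  rw [hsplit, Finset.card_union_of_disjoint dQB, Finset.card_union_of_disjoint dQP,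
    Finset.card_union_of_disjoint dAPAB]

end NodalGraph


end Aux

set_option maxHeartbeats 1000000 in
/-- Lemma 2.2: if `Z, Z'` are 2-tails with `C_γ ∪ C_{γ'} ⊆ Z ∧ Z'`
and `σ(0) ∈ Zᶜ ∧ (Z')ᶜ`, then `Z ∧ Z'` is a 2-tail. -/
theorem wedge_of_two_tails_is_two_tail
    (G : NodalGraph) (hconn : G.Connected) (Z Z' : Finset G.V) (γ γ' : G.V)
    (hZ : G.IsKTail Z 2) (hZ' : G.IsKTail Z' 2)
    (hγ : γ ∈ Z ∩ Z') (hγ' : γ' ∈ Z ∩ Z')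
    (hb : G.base ∈ Zᶜ ∩ Z'ᶜ) :
    G.IsKTail (Z ∩ Z') 2 := by
  classical
  obtain ⟨⟨hZne, hZc, hZcc⟩, hZk⟩ := hZ
  obtain ⟨⟨hZ'ne, hZ'c, hZ'cc⟩, hZ'k⟩ := hZ'
  have hbZ : G.base ∉ Z := Finset.mem_compl.1 (Finset.mem_inter.1 hb).1
  have hbZ' : G.base ∉ Z' := Finset.mem_compl.1 (Finset.mem_inter.1 hb).2
  by_cases hsub1 : Z ⊆ Z'
  · rw [Finset.inter_eq_left.mpr hsub1]; exact ⟨⟨hZne, hZc, hZcc⟩, hZk⟩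
  by_cases hsub2 : Z' ⊆ Z
  · rw [Finset.inter_eq_right.mpr hsub2]; exact ⟨⟨hZ'ne, hZ'c, hZ'cc⟩, hZ'k⟩
  -- the four regions
  set A : Finset G.V := Z ∩ Z' with hAdef
  set P : Finset G.V := Zᶜ ∩ Z' with hPdef
  set Q : Finset G.V := Z ∩ Z'ᶜ with hQdef
  set B : Finset G.V := Zᶜ ∩ Z'ᶜ with hBdef
  have memA : ∀ x, x ∈ A ↔ x ∈ Z ∧ x ∈ Z' := by
    intro x; rw [hAdef, Finset.mem_inter]
  have memP : ∀ x, x ∈ P ↔ x ∉ Z ∧ x ∈ Z' := by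
    intro x; rw [hPdef, Finset.mem_inter, Finset.mem_compl]
  have memQ : ∀ x, x ∈ Q ↔ x ∈ Z ∧ x ∉ Z' := by
    intro x; rw [hQdef, Finset.mem_inter, Finset.mem_compl]
  have memB : ∀ x, x ∈ B ↔ x ∉ Z ∧ x ∉ Z' := by
    intro x; rw [hBdef, Finset.mem_inter, Finset.mem_compl, Finset.mem_compl]
  -- nonemptiness of the regions
  have hAne : A.Nonempty := ⟨γ, hγ⟩
  have hBne : B.Nonempty := ⟨G.base, (memB _).2 ⟨hbZ, hbZ'⟩⟩
  have hQne : Q.Nonempty := by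
    obtain ⟨x, hx1, hx2⟩ := Finset.not_subset.1 hsub1
    exact ⟨x, (memQ _).2 ⟨hx1, hx2⟩⟩
  have hPne : P.Nonempty := by
    obtain ⟨x, hx1, hx2⟩ := Finset.not_subset.1 hsub2
    exact ⟨x, (memP _).2 ⟨hx2, hx1⟩⟩
  -- partitions
  have hZpart : ∀ x, x ∈ Z ↔ x ∈ A ∨ x ∈ Q := by
    intro x; rw [memA, memQ]; by_cases h : x ∈ Z' <;> tauto
  have hZcpart : ∀ x, x ∉ Z ↔ x ∈ P ∨ x ∈ B := by
    intro x; rw [memP, memB]; by_cases h : x ∈ Z' <;> tauto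
  have hZ'part : ∀ x, x ∈ Z' ↔ x ∈ A ∨ x ∈ P := by
    intro x; rw [memA, memP]; by_cases h : x ∈ Z <;> tauto
  have hZ'cpart : ∀ x, x ∉ Z' ↔ x ∈ Q ∨ x ∈ B := by
    intro x; rw [memQ, memB]; by_cases h : x ∈ Z <;> tauto
  have dAQ : ∀ x, x ∈ A → x ∈ Q → False := by
    intro x h1 h2; rw [memA] at h1; rw [memQ] at h2; tauto
  have dPB : ∀ x, x ∈ P → x ∈ B → False := by
    intro x h1 h2; rw [memP] at h1; rw [memB] at h2; tauto
  have dAP : ∀ x, x ∈ A → x ∈ P → False := by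
    intro x h1 h2; rw [memA] at h1; rw [memP] at h2; tauto
  have dQB : ∀ x, x ∈ Q → x ∈ B → False := by
    intro x h1 h2; rw [memQ] at h1; rw [memB] at h2; tauto
  -- connectivity of Zᶜ and Z'ᶜ as subcurves, with crossing edges
  have hZcompl : ∀ x, x ∈ Zᶜ ↔ x ∈ P ∨ x ∈ B := by
    intro x; rw [Finset.mem_compl]; exact hZcpart x
  have hZ'compl : ∀ x, x ∈ Z'ᶜ ↔ x ∈ Q ∨ x ∈ B := by
    intro x; rw [Finset.mem_compl]; exact hZ'cpart x
  have ha : (G.crossSet A P).Nonempty := G.exists_cross hZ'c hZ'part dAP hAne hPne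
  have hbb : (G.crossSet A Q).Nonempty := G.exists_cross hZc hZpart dAQ hAne hQne
  have hee : (G.crossSet P B).Nonempty := G.exists_cross hZcc hZcompl dPB hPne hBne
  have hff : (G.crossSet Q B).Nonempty := G.exists_cross hZ'cc hZ'compl dQB hQne hBne
  -- the two counting identities
  have cZ : (G.Term Z).card = (G.crossSet A P).card + (G.crossSet A B).card
      + (G.crossSet Q P).card + (G.crossSet Q B).card :=
    G.term_card_split Z A Q P B hZpart hZcpart dAQ dPB
  have cZ' : (G.Term Z').card = (G.crossSet A Q).card + (G.crossSet A B).card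
      + (G.crossSet P Q).card + (G.crossSet P B).card :=
    G.term_card_split Z' A P Q B hZ'part hZ'cpart dAP dQB
  have hcomm : (G.crossSet P Q).card = (G.crossSet Q P).card := by rw [G.crossSet_comm]
  have hZk2 : (G.Term Z).card = 2 := hZk
  have hZ'k2 : (G.Term Z').card = 2 := hZ'k
  have hapos : 0 < (G.crossSet A P).card := Finset.card_pos.2 ha
  have hbpos : 0 < (G.crossSet A Q).card := Finset.card_pos.2 hbb
  have hepos : 0 < (G.crossSet P B).card := Finset.card_pos.2 hee
  have hfpos : 0 < (G.crossSet Q B).card := Finset.card_pos.2 hff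
  have ha1 : (G.crossSet A P).card = 1 := by omega
  have hb1 : (G.crossSet A Q).card = 1 := by omega
  have hc0 : (G.crossSet A B).card = 0 := by omega
  have hd0 : (G.crossSet Q P).card = 0 := by omega
  -- counting the terminal points of A
  have hkA : (G.Term A).card = 2 := by
    have hsplitA : (G.Term A).card = (G.crossSet A P).card + (G.crossSet A (Q ∪ B)).card
        + (G.crossSet (∅ : Finset G.V) P).card
        + (G.crossSet (∅ : Finset G.V) (Q ∪ B)).card := by
      refine G.term_card_split A A ∅ P (Q ∪ B) ?_ ?_ ?_ ?_
      · intro x; simp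
      · intro x
        rw [Finset.mem_union, memA]
        constructor
        · intro h
          by_cases hxZ : x ∈ Z
          · exact Or.inr (Or.inl ((memQ _).2 ⟨hxZ, fun h' => h ⟨hxZ, h'⟩⟩))
          · by_cases hxZ' : x ∈ Z'
            · exact Or.inl ((memP _).2 ⟨hxZ, hxZ'⟩)
            · exact Or.inr (Or.inr ((memB _).2 ⟨hxZ, hxZ'⟩))
        · rintro (h | h | h) hA
          · rw [memP] at h; tauto
          · rw [memQ] at h; tauto
          · rw [memB] at h; tauto
      · intro x _ h; exact absurd h (Finset.notMem_empty x)
      · intro x h1 h2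
        rw [Finset.mem_union] at h2
        rcases h2 with h2 | h2
        · rw [memP] at h1; rw [memQ] at h2; tauto
        · exact dPB x h1 h2
    have hQB : (G.crossSet A (Q ∪ B)).card = 1 := by
      have hun : G.crossSet A (Q ∪ B) = G.crossSet A Q ∪ G.crossSet A B :=
        G.crossSet_union_right A Q B
      have hle : (G.crossSet A (Q ∪ B)).card ≤ 1 := by
        rw [hun]
        calc (G.crossSet A Q ∪ G.crossSet A B).card
            ≤ (G.crossSet A Q).card + (G.crossSet A B).card := Finset.card_union_le _ _
          _ = 1 := by omega
      have hge : 1 ≤ (G.crossSet A (Q ∪ B)).card := by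
        rw [hun]
        calc 1 = (G.crossSet A Q).card := hb1.symm
          _ ≤ (G.crossSet A Q ∪ G.crossSet A B).card :=
              Finset.card_le_card Finset.subset_union_left
      omega
    rw [hsplitA, G.crossSet_empty, G.crossSet_empty, hQB, ha1]
    simp
  -- connectivity of A
  obtain ⟨e₀, he₀⟩ := Finset.card_eq_one.1 ha1
  have he₀mem : e₀ ∈ G.crossSet A P := by rw [he₀]; exact Finset.mem_singleton_self e₀
  set x : G.V := if (G.ends e₀).1 ∈ A then (G.ends e₀).1 else (G.ends e₀).2 with hxdef
  have hx : x ∈ A := by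
    rcases (G.mem_crossSet).1 he₀mem with ⟨h1, h2⟩ | ⟨h1, h2⟩
    · rw [hxdef, if_pos h1]; exact h1
    · rw [hxdef, if_neg (fun h => dAP _ h h1)]; exact h2
  have hbd : ∀ a b, a ∈ A → b ∈ Z' → b ∉ A → G.Adj a b → a = x := by
    intro a b haA hbZ'' hbA hadj
    have hbP : b ∈ P := by
      rcases (hZ'part b).1 hbZ'' with h | h
      · exact absurd h hbA
      · exact h
    obtain ⟨e, hends⟩ := hadj
    have heM : e ∈ G.crossSet A P := by
      refine (G.mem_crossSet).2 ?_
      rcases hends with h | h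
      · exact Or.inl ⟨by rw [h]; exact haA, by rw [h]; exact hbP⟩
      · exact Or.inr ⟨by rw [h]; exact hbP, by rw [h]; exact haA⟩
    have hee₀ : e = e₀ := by
      rw [he₀] at heM; exact Finset.mem_singleton.1 heM
    subst hee₀
    rcases hends with h | h
    · rw [hxdef, h]; simp [haA]
    · rw [hxdef, h]; simp [hbA]
  have hAconn : G.ConnSub A :=
    G.connSub_of_unique_boundary hZ'c (hAdef ▸ Finset.inter_subset_right) hAne x hx hbd
  -- connectivity of Aᶜ
  have hAcconn : G.ConnSub Aᶜ := by
    rw [hAdef, Finset.compl_inter]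
    exact G.connSub_union hZcc hZ'cc (Finset.mem_inter.1 hb).1 (Finset.mem_inter.1 hb).2
  -- A is not everything
  have hAneq : A ≠ Finset.univ := by
    intro h
    exact hbZ ((memA G.base).1 (h ▸ Finset.mem_univ G.base)).1
  exact ⟨⟨hAneq, hAconn, hAcconn⟩, hkA⟩
end

section
/- Let C be a nodal curve and Z a tail of C. If Term_Z ⊂ Z' for some tail Z' of C, then either Z ⊆ Z' or Z^c ⊆ Z'. -/
open Finset

/-- Lemma 2.7(i): if every terminal point of a tail `Z` lies
on a tail `Z'`, then `Z ⊆ Z'` or `Zᶜ ⊆ Z'`. -/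
theorem tail_term_subset_imp
    (G : NodalGraph) (hconn : G.Connected) (Z Z' : Finset G.V)
    (hZ : G.IsTail Z) (hZ' : G.IsTail Z')
    (h : ∀ e ∈ G.Term Z, G.nodeOn e Z') :
    Z ⊆ Z' ∨ Zᶜ ⊆ Z' := by
  by_contra hcon
  push_neg at hcon
  obtain ⟨hnZ, hnZc⟩ := hcon
  rw [Finset.not_subset] at hnZ hnZc
  obtain ⟨a, haZ, haZ'⟩ := hnZ
  obtain ⟨b, hbZc, hbZ'⟩ := hnZc
  have hpath := hZ'.2.2.2 a (Finset.mem_compl.mpr haZ') b (Finset.mem_compl.mpr hbZ')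
  have key : ∀ y, Relation.ReflTransGen
      (fun p q => p ∈ Z'ᶜ ∧ q ∈ Z'ᶜ ∧ G.Adj p q) a y → y ∉ Z → False := by
    intro y hp
    induction hp with
    | refl => exact fun hy => hy haZ
    | @tail c y hp1 h2 ih =>
      intro hyZ
      by_cases hc : c ∈ Z
      · obtain ⟨hc1, hy1, e, he⟩ := h2
        have heT : e ∈ G.Term Z := by
          simp only [NodalGraph.Term, Finset.mem_filter, Finset.mem_univ, true_and]
          rcases he with he | he <;> rw [he] <;> simp [hc, hyZ]
        have := h e heT
        rcases he with he | he <;> rw [NodalGraph.nodeOn, he] at this <;>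
          rcases this with h' | h' <;>
          first
          | exact Finset.mem_compl.mp hc1 h'
          | exact Finset.mem_compl.mp hy1 h'
      · exact ih hc
  have hbZ : b ∉ Z := Finset.mem_compl.mp hbZc
  exact key b hpath hbZ
end

section
/- Let C be a nodal curve and Z, Z' tails of C. If #(Term_Z ∩ Term_{Z'}) = k_Z − 1, then the pair (Z, Z') is perfect, i.e., one of the inclusions Z ⊆ Z', Z' ⊆ Z, Z^c ⊆ Z', Z' ⊆ Z^c holds. -/
open Finset

private lemma cross_of_rtg (G : NodalGraph) (S Z : Finset G.V) :
    ∀ u v, Relation.ReflTransGen (fun a b => a ∈ S ∧ b ∈ S ∧ G.Adj a b) u v →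
      u ∈ Z → v ∉ Z → ∃ e, e ∈ G.Term Z ∧ (G.ends e).1 ∈ S ∧ (G.ends e).2 ∈ S := by
  intro u v h
  induction h with
  | refl => intro h1 h2; exact absurd h1 h2
  | @tail b c hub hbc ih =>
    intro huZ hcZ
    by_cases hb : b ∈ Z
    · obtain ⟨hbS, hcS, e, he⟩ := hbc
      rcases he with h1 | h1
      · refine ⟨e, ?_, ?_, ?_⟩ <;> simp [NodalGraph.Term, h1, hb, hcZ, hbS, hcS]
      · refine ⟨e, ?_, ?_, ?_⟩ <;> simp [NodalGraph.Term, h1, hb, hcZ, hbS, hcS]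
    · exact ih huZ hb

/-- Lemma 2.7(ii): if `#(Term_Z ∩ Term_{Z'}) = k_Z − 1` for
tails `Z, Z'`, then the pair `(Z, Z')` is perfect. -/
theorem perfect_of_card_term_inter
    (G : NodalGraph) (hconn : G.Connected) (Z Z' : Finset G.V)
    (hZ : G.IsTail Z) (hZ' : G.IsTail Z')
    (h : (G.Term Z ∩ G.Term Z').card = G.k Z - 1) :
    G.perfect Z Z' := by
  by_contra hperf
  simp only [NodalGraph.perfect, not_or] at hperf
  obtain ⟨h1, h2, h3, h4⟩ := hperf
  rw [Finset.not_subset] at h1 h2 h3 h4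
  obtain ⟨b, hbZ, hbZ'⟩ := h1
  obtain ⟨c, hcZ', hcZ⟩ := h2
  obtain ⟨d, hdZc, hdZ'⟩ := h3
  obtain ⟨a, haZ', haZc⟩ := h4
  have haZ : a ∈ Z := by simpa using haZc
  have hdZ : d ∉ Z := by simpa using hdZc
  obtain ⟨e₁, he₁T, he₁1, he₁2⟩ :=
    cross_of_rtg G Z' Z a c (hZ'.2.1.2 a haZ' c hcZ') haZ hcZ
  obtain ⟨e₂, he₂T, he₂1, he₂2⟩ :=
    cross_of_rtg G Z'ᶜ Z b d
      (hZ'.2.2.2 b (Finset.mem_compl.mpr hbZ') d (Finset.mem_compl.mpr hdZ')) hbZ hdZ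
  rw [Finset.mem_compl] at he₂1 he₂2
  have he₁D : e₁ ∈ G.Term Z \ G.Term Z' := by
    simp only [Finset.mem_sdiff, NodalGraph.Term, Finset.mem_filter, Finset.mem_univ,
      true_and] at he₁T ⊢
    exact ⟨he₁T, by push_neg; exact ⟨fun _ => he₁2, fun h => absurd he₁1 h⟩⟩
  have he₂D : e₂ ∈ G.Term Z \ G.Term Z' := by
    simp only [Finset.mem_sdiff, NodalGraph.Term, Finset.mem_filter, Finset.mem_univ,
      true_and] at he₂T ⊢
    exact ⟨he₂T, by push_neg; exact ⟨fun h => absurd h he₂1, fun _ => he₂2⟩⟩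
  have hne : e₁ ≠ e₂ := fun hEq => he₂1 (hEq ▸ he₁1)
  have h2le : 1 < (G.Term Z \ G.Term Z').card :=
    Finset.one_lt_card.mpr ⟨e₁, he₁D, e₂, he₂D, hne⟩
  have hcard := Finset.card_inter_add_card_sdiff (G.Term Z) (G.Term Z')
  unfold NodalGraph.k at h
  omega
end

section
/- Let C be a nodal curve, Z a tail with k_Z ≥ 2, and Z' a 1-tail of C. Then the pair (Z, Z') is free, i.e., Term_Z ∩ Term_{Z'} = ∅. -/
open Finset

namespace NodalGraph

lemma term_compl (G : NodalGraph) (Z : Finset G.V) : G.Term Zᶜ = G.Term Z := by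
  ext e
  simp only [Term, Finset.mem_filter, Finset.mem_univ, true_and, Finset.mem_compl]
  tauto

/-- If a connected subcurve `S` does not contain both branches of the unique
terminal node of `Z'`, then membership in `Z'` is constant on `S`. -/
lemma onesided (G : NodalGraph) {Z' : Finset G.V} {e : G.N}
    (hT : G.Term Z' = {e}) {S : Finset G.V}
    (hS : ∀ u ∈ S, ∀ v ∈ S,
      Relation.ReflTransGen (fun a b => a ∈ S ∧ b ∈ S ∧ G.Adj a b) u v)
    (hcr : ¬ G.crosses S e) :
    ∀ u ∈ S, ∀ v ∈ S, u ∈ Z' → v ∈ Z' := by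
  intro u hu v hv huZ
  by_contra hvZ
  have hpath := hS u hu v hv
  have key : ∀ w, Relation.ReflTransGen
      (fun a b => a ∈ S ∧ b ∈ S ∧ G.Adj a b) u w → w ∉ Z' →
      ∃ a b, a ∈ S ∧ b ∈ S ∧ G.Adj a b ∧
        ((a ∈ Z' ∧ b ∉ Z') ∨ (a ∉ Z' ∧ b ∈ Z')) := by
    intro w hw
    induction hw with
    | refl => intro h; exact absurd huZ h
    | @tail b c h1 h2 ih =>
        intro hc
        by_cases hb : b ∈ Z'
        · exact ⟨b, c, h2.1, h2.2.1, h2.2.2, Or.inl ⟨hb, hc⟩⟩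
        · exact ih hb
  obtain ⟨a, b, haS, hbS, ⟨e', he'⟩, hab⟩ := key v hpath hvZ
  have he'T : e' ∈ G.Term Z' := by
    simp only [Term, Finset.mem_filter, Finset.mem_univ, true_and]
    rcases he' with h | h <;> rw [h] <;> tauto
  rw [hT, Finset.mem_singleton] at he'T
  subst he'T
  apply hcr
  rcases he' with h | h <;> rw [crosses, h]
  · exact ⟨haS, hbS⟩
  · exact ⟨hbS, haS⟩

end NodalGraph

/-- Lemma 2.7(iii): a tail `Z` with `k_Z ≥ 2` is free with
respect to every 1-tail `Z'`. -/
theorem free_of_one_tail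
    (G : NodalGraph) (hconn : G.Connected) (Z Z' : Finset G.V)
    (hZ : G.IsTail Z) (hk : 2 ≤ G.k Z) (hZ' : G.IsKTail Z' 1) :
    G.free Z Z' := by
  classical
  obtain ⟨hZ'tail, hk'⟩ := hZ'
  obtain ⟨e, hT'⟩ := Finset.card_eq_one.mp hk'
  rw [NodalGraph.free]
  by_contra hne
  obtain ⟨e', he'⟩ := Finset.nonempty_iff_ne_empty.mpr hne
  rw [Finset.mem_inter] at he'
  obtain ⟨he'Z, he'Z'⟩ := he'
  have he'e : e' = e := by
    have := he'Z'; rw [hT', Finset.mem_singleton] at this; exact this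
  subst he'e
  set e := e' with he_def
  simp only [NodalGraph.Term, Finset.mem_filter, Finset.mem_univ, true_and] at he'Z he'Z'
  have hZnc : ¬ G.crosses Z e := by
    rw [NodalGraph.crosses]; tauto
  have hZcnc : ¬ G.crosses Zᶜ e := by
    rw [NodalGraph.crosses]; simp only [Finset.mem_compl]; tauto
  have hZone := G.onesided hT' hZ.2.1.2 hZnc
  have hZcone := G.onesided hT' hZ.2.2.2 hZcnc
  set x := (G.ends e).1
  set y := (G.ends e).2
  have finalZ : Z = Z' → False := by
    intro h
    have : G.k Z = 1 := by rw [NodalGraph.k, h]; exact hk'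
    omega
  have finalZc : Zᶜ = Z' → False := by
    intro h
    have : G.k Z = 1 := by
      rw [NodalGraph.k, ← G.term_compl Z, h]; exact hk'
    omega
  rcases he'Z with ⟨hxZ, hyZ⟩ | ⟨hxZ, hyZ⟩ <;>
    rcases he'Z' with ⟨hxZ', hyZ'⟩ | ⟨hxZ', hyZ'⟩
  · -- x ∈ Z ∩ Z', y in neither : Z = Z'
    apply finalZ
    apply Finset.Subset.antisymm
    · exact fun u hu => hZone x hxZ u hu hxZ'
    · intro u hu
      by_contra huZ
      exact hyZ' (hZcone u (Finset.mem_compl.mpr huZ) y (Finset.mem_compl.mpr hyZ) hu)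
  · -- x ∈ Z, y ∈ Z' : Zᶜ = Z'
    apply finalZc
    apply Finset.Subset.antisymm
    · intro u hu
      exact hZcone y (Finset.mem_compl.mpr hyZ) u hu hyZ'
    · intro u hu
      by_contra huZc
      rw [Finset.mem_compl, not_not] at huZc
      exact hxZ' (hZone u huZc x hxZ hu)
  · -- y ∈ Z, x ∈ Z' : Zᶜ = Z'
    apply finalZc
    apply Finset.Subset.antisymm
    · intro u hu
      exact hZcone x (Finset.mem_compl.mpr hxZ) u hu hxZ'
    · intro u hu
      by_contra huZc
      rw [Finset.mem_compl, not_not] at huZc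
      exact hyZ' (hZone u huZc y hyZ hu)
  · -- y ∈ Z ∩ Z' : Z = Z'
    apply finalZ
    apply Finset.Subset.antisymm
    · exact fun u hu => hZone y hyZ u hu hyZ'
    · intro u hu
      by_contra huZ
      exact hxZ' (hZcone u (Finset.mem_compl.mpr huZ) x (Finset.mem_compl.mpr hxZ) hu)
end

section
/- Let C be a nodal curve with a marked smooth point σ(0) and fix an irreducible component C_γ. Let T^1_γ be the set of 1-tails Z of C with C_γ ⊆ Z and σ(0) ∈ Z^c. Then T^1_γ is totally ordered under the relation W ≺ W' (meaning W ⊊ W' and Term_W ∩ Term_{W'} = ∅): for any W, W' in T^1_γ with W ≠ W', either W ≺ W' or W' ≺ W. -/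
open Finset

namespace NodalGraph

variable (G : NodalGraph)

lemma cross_lemma {Z A : Finset G.V} {u v : G.V}
    (h : Relation.ReflTransGen (fun a b => a ∈ Z ∧ b ∈ Z ∧ G.Adj a b) u v)
    (hu : u ∈ A) (hv : v ∉ A) :
    ∃ e, e ∈ G.Term A ∧ (G.ends e).1 ∈ Z ∧ (G.ends e).2 ∈ Z := by
  revert hv
  induction h with
  | refl => exact fun hv => absurd hu hv
  | @tail b c h step ih =>
    intro hv
    by_cases hb : b ∈ A
    · obtain ⟨e, he | he⟩ := step.2.2
      · exact ⟨e, by simp [Term, he, hb, hv], by simp [he, step.1],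
          by simp [he, step.2.1]⟩
      · exact ⟨e, by simp [Term, he, hb, hv], by simp [he, step.2.1],
          by simp [he, step.1]⟩
    · exact ih hb

lemma t1_subset {γ : G.V} {W W' : Finset G.V}
    (hW : W ∈ G.T1 γ) (hW' : W' ∈ G.T1 γ) : W ⊆ W' ∨ W' ⊆ W := by
  obtain ⟨⟨⟨_, _, hWcc⟩, hWk⟩, hγW, hbW⟩ := hW
  obtain ⟨⟨⟨_, hW'c, hW'cc⟩, _⟩, hγW', hbW'⟩ := hW'
  by_contra h
  push_neg at h
  obtain ⟨hns, hns'⟩ := h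
  obtain ⟨y, hyW', hyW⟩ := Finset.not_subset.mp hns'
  obtain ⟨x, hxW, hxW'⟩ := Finset.not_subset.mp hns
  obtain ⟨e, heT⟩ := Finset.card_eq_one.mp hWk
  obtain ⟨e1, he1T, he1a, _⟩ := G.cross_lemma (hW'c.2 γ hγW' y hyW') hγW hyW
  obtain ⟨e2, he2T, he2a, _⟩ := G.cross_lemma
    (hW'cc.2 x (Finset.mem_compl.mpr hxW') G.base (Finset.mem_compl.mpr hbW')) hxW hbW
  have h1 : e1 ∈ ({e} : Finset G.N) := heT ▸ he1T
  have h2 : e2 ∈ ({e} : Finset G.N) := heT ▸ he2T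
  simp only [Finset.mem_singleton] at h1 h2
  rw [h1, ← h2] at he1a
  exact Finset.mem_compl.mp he2a he1a

lemma t1_prec {γ : G.V} {W W' : Finset G.V}
    (hW : W ∈ G.T1 γ) (hW' : W' ∈ G.T1 γ) (hss : W ⊂ W') : G.prec W W' := by
  obtain ⟨⟨⟨_, _, hWcc⟩, _⟩, hγW, hbW⟩ := hW
  obtain ⟨⟨_, hW'k⟩, hγW', hbW'⟩ := hW'
  refine ⟨hss, ?_⟩
  obtain ⟨e', he'T⟩ := Finset.card_eq_one.mp hW'k
  rw [Finset.eq_empty_iff_forall_notMem]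
  intro f hf
  obtain ⟨hfW, hfW'⟩ := Finset.mem_inter.mp hf
  obtain ⟨v, hvW', hvW⟩ := Finset.exists_of_ssubset hss
  obtain ⟨g, hgT, hga, hgb⟩ := G.cross_lemma
    (hWcc.2 v (Finset.mem_compl.mpr hvW) G.base (Finset.mem_compl.mpr hbW)) hvW' hbW'
  have h1 : g ∈ ({e'} : Finset G.N) := he'T ▸ hgT
  have h2 : f ∈ ({e'} : Finset G.N) := he'T ▸ hfW'
  simp only [Finset.mem_singleton] at h1 h2
  rw [h1, ← h2] at hga hgb
  simp only [Term, Finset.mem_filter] at hfW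
  rcases hfW.2 with ⟨h', _⟩ | ⟨_, h'⟩
  · exact Finset.mem_compl.mp hga h'
  · exact Finset.mem_compl.mp hgb h'

end NodalGraph

/-- [7, Lemma 4.3]: the set `T¹_γ` of 1-tails containing `C_γ`
and avoiding `σ(0)` is totally ordered by `≺`. -/
theorem T1_totally_ordered
    (G : NodalGraph) (hconn : G.Connected) (γ : G.V) (W W' : Finset G.V)
    (hW : W ∈ G.T1 γ) (hW' : W' ∈ G.T1 γ) (hne : W ≠ W') :
    G.prec W W' ∨ G.prec W' W := by
  rcases G.t1_subset hW hW' with h | h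
  · exact Or.inl (G.t1_prec hW hW' (lt_of_le_of_ne h hne))
  · exact Or.inr (G.t1_prec hW' hW (lt_of_le_of_ne h hne.symm))
end
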